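/- Let Ω be a bounded connected open subset of ℝ² with Lipschitz boundary and let p ≥ 1 be an integer. Let H be a connected compact subset of Ω̄ and let (H_n) be a sequence of compact subsets of Ω̄, each with at most p connected components, converging to H in the Hausdorff metric. Then there exists a sequence (Ĥ_n) of connected compact subsets of Ω̄ such that Ĥ_n → H in the Hausdorff metric, H_n ⊆ Ĥ_n for every n, and ℋ¹(Ĥ_n \ H_n) → 0. -/

import Mathlib

open MeasureTheory Filter Set
open scoped Classical
open scoped ENNReal NNReal

noncomputable section

/-- The plane `ℝ²`. -/
abbrev E2 : Type := EuclideanSpace ℝ (Fin 2)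

/-- Distance from a point to a set, with the convention `dist(x, ∅) = diam Ω`. -/
def distIn (Ω : Set E2) (x : E2) (S : Set E2) : ℝ :=
  if S = ∅ then Metric.diam Ω else Metric.infDist x S

/-- Hausdorff distance between subsets of `closure Ω`, with the conventions
`dist(x, ∅) = diam Ω` and `sup ∅ = 0`. -/
def hausDistIn (Ω K₁ K₂ : Set E2) : ℝ :=
  max (sSup ((fun x => distIn Ω x K₂) '' K₁)) (sSup ((fun x => distIn Ω x K₁) '' K₂))

/-- Convergence of a sequence of compact subsets of `closure Ω` in the Hausdorff metric. -/
def TendstoHausdorff (Ω : Set E2) (K : ℕ → Set E2) (L : Set E2) : Prop :=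
  Filter.Tendsto (fun n => hausDistIn Ω (K n) L) Filter.atTop (nhds 0)

/-- `K` has at most `m` connected components: it is the union of `m` preconnected sets. -/
def AtMostComponents (m : ℕ) (K : Set E2) : Prop :=
  ∃ C : Fin m → Set E2, (∀ i, IsPreconnected (C i)) ∧ K = ⋃ i, C i

/-- `x` is a point of the Lipschitz part of the boundary of `A`: near `x`, in suitable
orthogonal coordinates, `A` is the sub-graph of a Lipschitz function `Φ : (a,b) → (c,d)`
inside the rectangle `(a,b) × (c,d)` containing `x`. -/
def IsLipschitzBoundaryPoint (A : Set E2) (x : E2) : Prop :=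
  x ∈ frontier A ∧
  ∃ (f : E2 ≃ₗᵢ[ℝ] E2) (a b c d : ℝ) (Φ : ℝ → ℝ) (L : NNReal),
    LipschitzOnWith L Φ (Set.Ioo a b) ∧
    (∀ s ∈ Set.Ioo a b, Φ s ∈ Set.Ioo c d) ∧
    f x 0 ∈ Set.Ioo a b ∧ f x 1 ∈ Set.Ioo c d ∧
    A ∩ f ⁻¹' {y : E2 | y 0 ∈ Set.Ioo a b ∧ y 1 ∈ Set.Ioo c d} =
      f ⁻¹' {y : E2 | y 0 ∈ Set.Ioo a b ∧ y 1 ∈ Set.Ioo c d ∧ y 1 < Φ (y 0)}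

/-- `A` has a Lipschitz boundary. -/
def HasLipschitzBoundary (A : Set E2) : Prop :=
  ∀ x ∈ frontier A, IsLipschitzBoundaryPoint A x

def mkpt (s t : ℝ) : E2 := (WithLp.equiv 2 (Fin 2 → ℝ)).symm ![s, t]

@[simp] lemma mkpt_zero (s t : ℝ) : mkpt s t 0 = s := rfl
@[simp] lemma mkpt_one (s t : ℝ) : mkpt s t 1 = t := rfl

lemma e2_ext {u v : E2} (h0 : u 0 = v 0) (h1 : u 1 = v 1) : u = v := by
  ext i; fin_cases i <;> assumption

lemma e2_norm_eq (v : E2) : ‖v‖ = Real.sqrt ((v 0)^2 + (v 1)^2) := by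
  rw [EuclideanSpace.norm_eq]
  simp [Fin.sum_univ_two, sq_abs, sq]

lemma e2_abs_le (v : E2) (i : Fin 2) : |v i| ≤ ‖v‖ := by
  rw [e2_norm_eq, ← Real.sqrt_sq_eq_abs]
  apply Real.sqrt_le_sqrt
  fin_cases i <;> simp only [Fin.isValue, Fin.mk_zero, Fin.mk_one] <;>
    nlinarith [sq_nonneg (v 0), sq_nonneg (v 1)]

lemma e2_norm_le (v : E2) : ‖v‖ ≤ |v 0| + |v 1| := by
  rw [e2_norm_eq]
  have h : (v 0)^2 + (v 1)^2 ≤ (|v 0| + |v 1|)^2 := by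
    nlinarith [sq_abs (v 0), sq_abs (v 1), abs_nonneg (v 0), abs_nonneg (v 1)]
  calc Real.sqrt ((v 0)^2 + (v 1)^2) ≤ Real.sqrt ((|v 0| + |v 1|)^2) := Real.sqrt_le_sqrt h
    _ = |v 0| + |v 1| := Real.sqrt_sq (by positivity)

lemma e2_dist (u v : E2) : dist u v = Real.sqrt ((u 0 - v 0)^2 + (u 1 - v 1)^2) := by
  rw [dist_eq_norm, e2_norm_eq]; rfl

lemma e2_abs_sub_le (u v : E2) (i : Fin 2) : |u i - v i| ≤ dist u v := by
  rw [dist_eq_norm]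
  simpa using e2_abs_le (u - v) i

lemma e2_dist_le (u v : E2) : dist u v ≤ |u 0 - v 0| + |u 1 - v 1| := by
  rw [dist_eq_norm]
  simpa using e2_norm_le (u - v)

lemma seg_coord {u v z : E2} (hz : z ∈ segment ℝ u v) (i : Fin 2) :
    z i ∈ segment ℝ (u i) (v i) := by
  obtain ⟨a, b, ha, hb, hab, rfl⟩ := hz
  exact ⟨a, b, ha, hb, hab, rfl⟩

lemma seg_compact (u v : E2) : IsCompact (segment ℝ u v) := by
  rw [segment_eq_image_lineMap]
  exact isCompact_Icc.image AffineMap.lineMap_continuous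

lemma seg_measure (u v : E2) : μH[1] (segment ℝ u v) = ENNReal.ofReal (dist u v) := by
  rw [hausdorffMeasure_segment, edist_dist]

lemma coord_abs_le_dist (f : E2 ≃ₗᵢ[ℝ] E2) (u v : E2) (i : Fin 2) :
    |f u i - f v i| ≤ dist u v := by
  rw [← f.dist_map u v]
  exact e2_abs_sub_le (f u) (f v) i

set_option maxHeartbeats 2000000 in
/-- The local quasiconvexity lemma near a Lipschitz boundary point. -/
lemma chart_lemma (Ω : Set E2) (hΩo : IsOpen Ω) {z : E2} (hz : IsLipschitzBoundaryPoint Ω z) :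
    ∃ ρ > (0:ℝ), ∃ C ≥ (1:ℝ), ∀ x y, x ∈ closure Ω → y ∈ closure Ω →
      dist x z < ρ → dist y z < ρ →
      ∃ K, IsCompact K ∧ IsConnected K ∧ K ⊆ closure Ω ∧ x ∈ K ∧ y ∈ K ∧
        μH[1] K ≤ ENNReal.ofReal (C * dist x y) ∧ K ⊆ Metric.closedBall x (C * dist x y) := by
  obtain ⟨hzf, f, a, b, c, d, Φ, L, hLip, hΦmem, hza, hzc, heq⟩ := hz
  set Lr : ℝ := (L : ℝ) with hLr
  have hLr0 : 0 ≤ Lr := L.coe_nonneg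
  -- the key one-sided fact
  have star : ∀ w ∈ closure Ω, f w 0 ∈ Set.Ioo a b → f w 1 ∈ Set.Ioo c d →
      f w 1 ≤ Φ (f w 0) := by
    intro w hw hw0 hw1
    by_contra hlt
    push_neg at hlt
    -- the open set above the graph
    set V : Set E2 := {y : E2 | y 0 ∈ Set.Ioo a b ∧ y 1 ∈ Set.Ioo c d ∧ Φ (y 0) < y 1} with hV
    have hcoord : ∀ i : Fin 2, Continuous (fun y : E2 => y i) := by
      intro i
      have : LipschitzWith 1 (fun y : E2 => y i) := by
        apply LipschitzWith.of_dist_le_mul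
        intro u v
        rw [NNReal.coe_one, one_mul, Real.dist_eq]
        exact e2_abs_sub_le u v i
      exact this.continuous
    have hVopen : IsOpen V := by
      have hW : IsOpen {y : E2 | y 0 ∈ Set.Ioo a b ∧ y 1 ∈ Set.Ioo c d} :=
        ((isOpen_Ioo.preimage (hcoord 0)).inter (isOpen_Ioo.preimage (hcoord 1)))
      have hg : ContinuousOn (fun y : E2 => y 1 - Φ (y 0))
          {y : E2 | y 0 ∈ Set.Ioo a b ∧ y 1 ∈ Set.Ioo c d} := by
        apply ContinuousOn.sub ((hcoord 1).continuousOn)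
        exact hLip.continuousOn.comp ((hcoord 0).continuousOn) (fun y hy => hy.1)
      have := hg.isOpen_inter_preimage hW (isOpen_Ioi (a := (0:ℝ)))
      convert this using 1
      ext y
      simp only [hV, Set.mem_setOf_eq, Set.mem_inter_iff, Set.mem_preimage, Set.mem_Ioi]
      constructor
      · rintro ⟨h1, h2, h3⟩; exact ⟨⟨h1, h2⟩, by linarith⟩
      · rintro ⟨⟨h1, h2⟩, h3⟩; exact ⟨h1, h2, by linarith⟩
    have hUopen : IsOpen (f ⁻¹' V) := hVopen.preimage f.continuous
    have hwU : w ∈ f ⁻¹' V := ⟨hw0, hw1, hlt⟩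
    obtain ⟨u, huU, huΩ⟩ := (_root_.mem_closure_iff.1 hw (f ⁻¹' V) hUopen hwU)
    have : u ∈ Ω ∩ f ⁻¹' {y : E2 | y 0 ∈ Set.Ioo a b ∧ y 1 ∈ Set.Ioo c d} :=
      ⟨huΩ, huU.1, huU.2.1⟩
    rw [heq] at this
    exact absurd this.2.2 (not_lt.2 (le_of_lt huU.2.2))
  -- set up the chart constants
  set sz : ℝ := f z 0 with hsz
  set tz : ℝ := f z 1 with htz
  obtain ⟨hsza, hszb⟩ := hza
  obtain ⟨htzc, htzd⟩ := hzc
  set ρ : ℝ := min (min ((sz - a)/2) ((b - sz)/2)) (min ((d - tz)/2) ((tz - c)/(8*Lr+8)))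
    with hρdef
  have hLr8 : (0:ℝ) < 8*Lr+8 := by linarith
  have hρpos : 0 < ρ := by
    apply lt_min (lt_min (by linarith) (by linarith))
    exact lt_min (by linarith) (div_pos (by linarith) (by linarith))
  have hρa : 2*ρ ≤ sz - a := by
    have : ρ ≤ (sz - a)/2 := le_trans (min_le_left _ _) (min_le_left _ _)
    linarith
  have hρb : 2*ρ ≤ b - sz := by
    have : ρ ≤ (b - sz)/2 := le_trans (min_le_left _ _) (min_le_right _ _)
    linarith
  have hρd : 2*ρ ≤ d - tz := by
    have : ρ ≤ (d - tz)/2 := le_trans (min_le_right _ _) (min_le_left _ _)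
    linarith
  have hρc : (8*Lr+8)*ρ ≤ tz - c := by
    have h1 : ρ ≤ (tz - c)/(8*Lr+8) := le_trans (min_le_right _ _) (min_le_right _ _)
    calc (8*Lr+8)*ρ ≤ (8*Lr+8)*((tz - c)/(8*Lr+8)) := by
          exact mul_le_mul_of_nonneg_left h1 (le_of_lt hLr8)
      _ = tz - c := by field_simp
  set C : ℝ := 2*Lr + 5 with hCdef
  have hC1 : (1:ℝ) ≤ C := by linarith
  refine ⟨ρ, hρpos, C, hC1, ?_⟩
  intro x y hxcl hycl hxz hyz
  by_cases hxy : x = y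
  · subst hxy
    refine ⟨{x}, isCompact_singleton, isConnected_singleton, by
        simpa using hxcl, rfl, rfl, ?_, ?_⟩
    · rw [← segment_same ℝ x, seg_measure]
      simp
    · intro w hw
      rw [Set.mem_singleton_iff] at hw
      subst hw
      simp only [Metric.mem_closedBall, dist_self]
      positivity
  have hr : 0 < dist x y := dist_pos.2 hxy
  set r : ℝ := dist x y with hrdef
  have hLrr : 0 ≤ Lr*r := mul_nonneg hLr0 hr.le
  have hr2 : r < 2*ρ := by
    calc r ≤ dist x z + dist y z := by rw [hrdef, dist_comm y z]; exact dist_triangle x z y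
      _ < 2*ρ := by linarith
  set sx : ℝ := f x 0 with hsxd
  set tx : ℝ := f x 1 with htxd
  set sy : ℝ := f y 0 with hsyd
  set ty : ℝ := f y 1 with htyd
  have hx0 : |sx - sz| < ρ := lt_of_le_of_lt (coord_abs_le_dist f x z 0) hxz
  have hx1 : |tx - tz| < ρ := lt_of_le_of_lt (coord_abs_le_dist f x z 1) hxz
  have hy0 : |sy - sz| < ρ := lt_of_le_of_lt (coord_abs_le_dist f y z 0) hyz
  have hy1 : |ty - tz| < ρ := lt_of_le_of_lt (coord_abs_le_dist f y z 1) hyz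
  have hxy0 : |sx - sy| ≤ r := coord_abs_le_dist f x y 0
  have hxy1 : |tx - ty| ≤ r := coord_abs_le_dist f x y 1
  obtain ⟨hx0l, hx0r⟩ := abs_lt.1 hx0
  obtain ⟨hx1l, hx1r⟩ := abs_lt.1 hx1
  obtain ⟨hy0l, hy0r⟩ := abs_lt.1 hy0
  obtain ⟨hy1l, hy1r⟩ := abs_lt.1 hy1
  obtain ⟨hxy0l, hxy0r⟩ := abs_le.1 hxy0
  obtain ⟨hxy1l, hxy1r⟩ := abs_le.1 hxy1
  have hxr0 : sx ∈ Set.Ioo a b := ⟨by linarith, by linarith⟩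
  have hρtzc : ρ ≤ tz - c := by
    nlinarith [mul_nonneg (by linarith : (0:ℝ) ≤ 8*Lr+7) hρpos.le]
  have hxr1 : tx ∈ Set.Ioo c d := ⟨by linarith, by linarith⟩
  have hyr0 : sy ∈ Set.Ioo a b := ⟨by linarith, by linarith⟩
  have hyr1 : ty ∈ Set.Ioo c d := ⟨by linarith, by linarith⟩
  have hstx : tx ≤ Φ sx := star x hxcl hxr0 hxr1
  have hsty : ty ≤ Φ sy := star y hycl hyr0 hyr1
  set h : ℝ := min tx ty - (Lr+1)*r with hhdef
  have hmtx : tx - min tx ty ≤ r := by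
    rcases le_total tx ty with h' | h'
    · rw [min_eq_left h']; linarith
    · rw [min_eq_right h']; linarith
  have hmty : ty - min tx ty ≤ r := by
    rcases le_total tx ty with h' | h'
    · rw [min_eq_left h']; linarith
    · rw [min_eq_right h']; linarith
  have hhtx : h ≤ tx := by
    have : (0:ℝ) ≤ (Lr+1)*r := by positivity
    have := min_le_left tx ty
    linarith
  have hhty : h ≤ ty := by
    have : (0:ℝ) ≤ (Lr+1)*r := by positivity
    have := min_le_right tx ty
    linarith
  have hhc : c < h := by
    have h1 : tz - ρ < min tx ty := by
      rcases le_total tx ty with h' | h'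
      · rw [min_eq_left h']; linarith
      · rw [min_eq_right h']; linarith
    have h2 : (Lr+1)*r < (Lr+1)*(2*ρ) := by
      apply mul_lt_mul_of_pos_left hr2; linarith
    have h3 : 0 ≤ (6*Lr+5)*ρ := mul_nonneg (by linarith) hρpos.le
    have h4 : (Lr+1)*(2*ρ) = 2*(Lr*ρ)+2*ρ := by ring
    have h5 : (6*Lr+5)*ρ = 6*(Lr*ρ)+5*ρ := by ring
    have h6 : (8*Lr+8)*ρ = 8*(Lr*ρ)+8*ρ := by ring
    rw [h4] at h2
    rw [h5] at h3
    rw [h6] at hρc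
    linarith
  have hhd : h < d := by linarith
  -- lower bound for Φ on the interval between sx and sy
  have hΦint : ∀ s, s ∈ Set.uIcc sx sy → s ∈ Set.Ioo a b ∧ h < Φ s := by
    intro s hs
    rw [Set.uIcc_eq_union, Set.mem_union] at hs
    have hsab : s ∈ Set.Ioo a b ∧ |s - sx| ≤ r := by
      rcases hs with hs | hs
      · obtain ⟨h1, h2⟩ := hs
        refine ⟨⟨by linarith, by linarith⟩, ?_⟩
        rw [abs_le]; constructor <;> linarith
      · obtain ⟨h1, h2⟩ := hs
        refine ⟨⟨by linarith, by linarith⟩, ?_⟩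
        rw [abs_le]; constructor <;> linarith
    refine ⟨hsab.1, ?_⟩
    have hL : |Φ s - Φ sx| ≤ Lr * |s - sx| := by
      have := LipschitzOnWith.dist_le_mul hLip s hsab.1 sx hxr0
      rwa [Real.dist_eq, Real.dist_eq] at this
    have h2 : Lr * |s - sx| ≤ Lr * r := mul_le_mul_of_nonneg_left hsab.2 hLr0
    have h3 := (abs_le.1 hL).1
    have h4 := min_le_left tx ty
    linarith
  -- the three segments
  set x' : E2 := f x with hx'd
  set y' : E2 := f y with hy'd
  set P1 : E2 := mkpt sx h with hP1d
  set P2 : E2 := mkpt sy h with hP2d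
  have hx'0 : x' 0 = sx := rfl
  have hx'1 : x' 1 = tx := rfl
  have hy'0 : y' 0 = sy := rfl
  have hy'1 : y' 1 = ty := rfl
  set S : Set E2 := segment ℝ P1 x' ∪ segment ℝ P1 P2 ∪ segment ℝ P2 y' with hSdef
  set K : Set E2 := f.symm '' S with hKdef
  -- membership of S in the image of closure Ω
  have memΩ : ∀ w : E2, w 0 ∈ Set.Ioo a b → w 1 ∈ Set.Ioo c d → w 1 < Φ (w 0) →
      f.symm w ∈ Ω := by
    intro w h0 h1 h2
    have hw : f.symm w ∈ f ⁻¹' {y : E2 | y 0 ∈ Set.Ioo a b ∧ y 1 ∈ Set.Ioo c d ∧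
        y 1 < Φ (y 0)} := by
      simp only [Set.mem_preimage, f.apply_symm_apply]
      exact ⟨h0, h1, h2⟩
    rw [← heq] at hw
    exact hw.1
  have hSsub : ∀ w ∈ S, f.symm w ∈ closure Ω := by
    intro w hw
    rcases hw with (hw | hw) | hw
    · -- vertical segment at sx
      have h0 : w 0 = sx := by
        have := seg_coord hw 0
        rw [hP1d, mkpt_zero, hx'0, segment_same, Set.mem_singleton_iff] at this
        exact this
      have h1 : w 1 ∈ Set.Icc h tx := by
        have := seg_coord hw 1
        rw [hP1d, mkpt_one, hx'1, segment_eq_uIcc, Set.uIcc_of_le hhtx] at this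
        exact this
      obtain ⟨h1l, h1r⟩ := h1
      rcases lt_or_eq_of_le h1r with hlt | heq2
      · apply subset_closure
        apply memΩ w (h0 ▸ hxr0) ⟨by linarith, by linarith⟩
        rw [h0]; linarith
      · have : w = x' := e2_ext (by rw [h0, hx'0]) (by rw [heq2, hx'1])
        rw [this, hx'd, f.symm_apply_apply]
        exact hxcl
    · -- horizontal segment
      have h1 : w 1 = h := by
        have := seg_coord hw 1
        rw [hP1d, hP2d, mkpt_one, mkpt_one, segment_same, Set.mem_singleton_iff] at this
        exact this
      have h0 : w 0 ∈ Set.uIcc sx sy := by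
        have := seg_coord hw 0
        rw [hP1d, hP2d, mkpt_zero, mkpt_zero, segment_eq_uIcc] at this
        exact this
      obtain ⟨hab, hΦ⟩ := hΦint (w 0) h0
      apply subset_closure
      apply memΩ w hab ⟨by rw [h1]; exact hhc, by rw [h1]; exact hhd⟩
      rw [h1]; exact hΦ
    · -- vertical segment at sy
      have h0 : w 0 = sy := by
        have := seg_coord hw 0
        rw [hP2d, mkpt_zero, hy'0, segment_same, Set.mem_singleton_iff] at this
        exact this
      have h1 : w 1 ∈ Set.Icc h ty := by
        have := seg_coord hw 1
        rw [hP2d, mkpt_one, hy'1, segment_eq_uIcc, Set.uIcc_of_le hhty] at this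
        exact this
      obtain ⟨h1l, h1r⟩ := h1
      rcases lt_or_eq_of_le h1r with hlt | heq2
      · apply subset_closure
        apply memΩ w (h0 ▸ hyr0) ⟨by linarith, by linarith⟩
        rw [h0]; linarith
      · have : w = y' := e2_ext (by rw [h0, hy'0]) (by rw [heq2, hy'1])
        rw [this, hy'd, f.symm_apply_apply]
        exact hycl
  have hKsub : K ⊆ closure Ω := by
    rintro _ ⟨w, hw, rfl⟩
    exact hSsub w hw
  -- compactness and connectedness
  have hScomp : IsCompact S :=
    ((seg_compact P1 x').union (seg_compact P1 P2)).union (seg_compact P2 y')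
  have hKcomp : IsCompact K := hScomp.image f.symm.continuous
  have hxK : x ∈ K := by
    refine ⟨x', Set.mem_union_left _ (Set.mem_union_left _ (right_mem_segment ℝ P1 x')), ?_⟩
    rw [hx'd, f.symm_apply_apply]
  have hyK : y ∈ K := by
    refine ⟨y', Set.mem_union_right _ (right_mem_segment ℝ P2 y'), ?_⟩
    rw [hy'd, f.symm_apply_apply]
  have hSpre : IsPreconnected S := by
    apply IsPreconnected.union P2
    · exact Set.mem_union_right _ (right_mem_segment ℝ P1 P2)
    · exact left_mem_segment ℝ P2 y'
    · apply IsPreconnected.union P1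
      · exact left_mem_segment ℝ P1 x'
      · exact left_mem_segment ℝ P1 P2
      · exact (convex_segment P1 x').isPreconnected
      · exact (convex_segment P1 P2).isPreconnected
    · exact (convex_segment P2 y').isPreconnected
  have hKconn : IsConnected K :=
    ⟨⟨x, hxK⟩, hSpre.image _ f.symm.continuous.continuousOn⟩
  -- distance computations
  have dP1x' : dist P1 x' ≤ (Lr+2)*r := by
    have := e2_dist_le P1 x'
    rw [hP1d, mkpt_zero, mkpt_one, hx'0, hx'1] at this
    have h1 : |sx - sx| = 0 := by simp
    have h2 : |h - tx| = tx - h := by rw [abs_sub_comm, abs_of_nonneg (by linarith)]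
    rw [h1, h2] at this
    have : dist P1 x' ≤ tx - h := by linarith
    have h3 : tx - h ≤ (Lr+2)*r := by
      rw [hhdef]; linarith
    linarith
  have dP2y' : dist P2 y' ≤ (Lr+2)*r := by
    have := e2_dist_le P2 y'
    rw [hP2d, mkpt_zero, mkpt_one, hy'0, hy'1] at this
    have h1 : |sy - sy| = 0 := by simp
    have h2 : |h - ty| = ty - h := by rw [abs_sub_comm, abs_of_nonneg (by linarith)]
    rw [h1, h2] at this
    have : dist P2 y' ≤ ty - h := by linarith
    have h3 : ty - h ≤ (Lr+2)*r := by
      rw [hhdef]; linarith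
    linarith
  have dP1P2 : dist P1 P2 ≤ r := by
    have := e2_dist_le P1 P2
    rw [hP1d, hP2d, mkpt_zero, mkpt_one, mkpt_zero, mkpt_one] at this
    have h1 : |h - h| = 0 := by simp
    rw [h1] at this
    linarith
  have dP2x' : dist P2 x' ≤ (Lr+3)*r := by
    have := e2_dist_le P2 x'
    rw [hP2d, mkpt_zero, mkpt_one, hx'0, hx'1] at this
    have h1 : |sy - sx| ≤ r := by rw [abs_sub_comm]; exact hxy0
    have h2 : |h - tx| = tx - h := by rw [abs_sub_comm, abs_of_nonneg (by linarith)]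
    rw [h2] at this
    have h3 : tx - h ≤ (Lr+2)*r := by rw [hhdef]; linarith
    linarith
  have dy'x' : dist y' x' = r := by
    rw [hx'd, hy'd, f.dist_map, dist_comm]
  -- measure bound
  have hmeas : μH[1] K ≤ ENNReal.ofReal (C * r) := by
    have hKS : μH[1] K = μH[1] S :=
      f.symm.isometry.hausdorffMeasure_image (Or.inl zero_le_one) S
    rw [hKS]
    calc μH[1] S ≤ μH[1] (segment ℝ P1 x' ∪ segment ℝ P1 P2) + μH[1] (segment ℝ P2 y') :=
          measure_union_le _ _
      _ ≤ (μH[1] (segment ℝ P1 x') + μH[1] (segment ℝ P1 P2)) + μH[1] (segment ℝ P2 y') :=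
          add_le_add (measure_union_le _ _) le_rfl
      _ = ENNReal.ofReal (dist P1 x') + ENNReal.ofReal (dist P1 P2)
          + ENNReal.ofReal (dist P2 y') := by rw [seg_measure, seg_measure, seg_measure]
      _ = ENNReal.ofReal (dist P1 x' + dist P1 P2 + dist P2 y') := by
          rw [← ENNReal.ofReal_add dist_nonneg dist_nonneg,
            ← ENNReal.ofReal_add (add_nonneg dist_nonneg dist_nonneg) dist_nonneg]
      _ ≤ ENNReal.ofReal (C * r) := by
          apply ENNReal.ofReal_le_ofReal
          rw [hCdef]; linarith
  -- ball bound
  have hSball : S ⊆ Metric.closedBall x' (C * r) := by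
    have hconv := convex_closedBall x' (C * r)
    have e1 : x' ∈ Metric.closedBall x' (C*r) := by
      simp only [Metric.mem_closedBall, dist_self]
      rw [hCdef]; linarith
    have e2 : P1 ∈ Metric.closedBall x' (C*r) := by
      rw [Metric.mem_closedBall]
      rw [hCdef]; linarith
    have e3 : P2 ∈ Metric.closedBall x' (C*r) := by
      rw [Metric.mem_closedBall]
      rw [hCdef]; linarith
    have e4 : y' ∈ Metric.closedBall x' (C*r) := by
      rw [Metric.mem_closedBall, dy'x']
      rw [hCdef]; linarith
    apply Set.union_subset (Set.union_subset ?_ ?_) ?_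
    · exact hconv.segment_subset e2 e1
    · exact hconv.segment_subset e2 e3
    · exact hconv.segment_subset e3 e4
  have hKball : K ⊆ Metric.closedBall x (C * r) := by
    rintro _ ⟨w, hw, rfl⟩
    have : dist (f.symm w) x = dist w x' := by
      conv_lhs => rw [show x = f.symm x' by rw [hx'd, f.symm_apply_apply]]
      rw [f.symm.dist_map]
    rw [Metric.mem_closedBall, this]
    exact hSball hw
  exact ⟨K, hKcomp, hKconn, hKsub, hxK, hyK, hmeas, hKball⟩

set_option maxHeartbeats 1000000 in
/-- Global quasiconvexity of the closure of a bounded open set with Lipschitz boundary. -/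
lemma quasiconvex (Ω : Set E2) (hΩo : IsOpen Ω) (hΩb : Bornology.IsBounded Ω)
    (hΩlip : HasLipschitzBoundary Ω) :
    ∃ C ≥ (1:ℝ), ∃ δ₀ > (0:ℝ), ∀ x y, x ∈ closure Ω → y ∈ closure Ω → dist x y < δ₀ →
      ∃ K, IsCompact K ∧ IsConnected K ∧ K ⊆ closure Ω ∧ x ∈ K ∧ y ∈ K ∧
        μH[1] K ≤ ENNReal.ofReal (C * dist x y) ∧ K ⊆ Metric.closedBall x (C * dist x y) := by
  classical
  have hcc : IsCompact (closure Ω) :=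
    Metric.isCompact_of_isClosed_isBounded isClosed_closure hΩb.closure
  have hfc : IsCompact (frontier Ω) :=
    hcc.of_isClosed_subset isClosed_frontier frontier_subset_closure
  -- choose chart radii and constants
  have hchart : ∀ z : E2, z ∈ frontier Ω → ∃ ρ, 0 < ρ ∧ ∃ C, 1 ≤ C ∧
      ∀ x y, x ∈ closure Ω → y ∈ closure Ω → dist x z < ρ → dist y z < ρ →
      ∃ K, IsCompact K ∧ IsConnected K ∧ K ⊆ closure Ω ∧ x ∈ K ∧ y ∈ K ∧
        μH[1] K ≤ ENNReal.ofReal (C * dist x y) ∧ K ⊆ Metric.closedBall x (C * dist x y) := by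
    intro z hzf
    obtain ⟨ρ, hρ, C, hC, hprop⟩ := chart_lemma Ω hΩo (hΩlip z hzf)
    exact ⟨ρ, hρ, C, hC, hprop⟩
  choose! ρf hρf Cf hCf hpropf using hchart
  -- finite subcover of the frontier
  have hfcov : frontier Ω ⊆ ⋃ z ∈ frontier Ω, Metric.ball z (ρf z) := by
    intro z hz
    exact Set.mem_biUnion hz (Metric.mem_ball_self (hρf z hz))
  obtain ⟨b, hbsub, hbfin, hbcov⟩ :=
    hfc.elim_finite_subcover_image (fun z _ => Metric.isOpen_ball) hfcov
  -- a common constant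
  set C : ℝ := 1 + ∑ z ∈ hbfin.toFinset, |Cf z| with hCdef
  have hC1 : (1:ℝ) ≤ C := by
    have : (0:ℝ) ≤ ∑ z ∈ hbfin.toFinset, |Cf z| :=
      Finset.sum_nonneg (fun z _ => abs_nonneg _)
    linarith
  have hCz : ∀ z ∈ b, Cf z ≤ C := by
    intro z hzb
    have h1 : |Cf z| ≤ ∑ w ∈ hbfin.toFinset, |Cf w| :=
      Finset.single_le_sum (fun w _ => abs_nonneg (Cf w)) (hbfin.mem_toFinset.2 hzb)
    have := le_abs_self (Cf z)
    linarith
  -- Lebesgue number for the cover of the closure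
  set U : Sum Unit {z : E2 // z ∈ b} → Set E2 :=
    Sum.elim (fun _ => Ω) (fun z => Metric.ball z.1 (ρf z.1)) with hUdef
  have hUopen : ∀ i, IsOpen (U i) := by
    rintro (i | i)
    · exact hΩo
    · exact Metric.isOpen_ball
  have hUcov : closure Ω ⊆ ⋃ i, U i := by
    intro w hw
    rcases (em (w ∈ Ω)) with hwΩ | hwΩ
    · exact Set.mem_iUnion.2 ⟨Sum.inl ⟨⟩, hwΩ⟩
    · have hwf : w ∈ frontier Ω := by
        rw [hΩo.frontier_eq]; exact ⟨hw, hwΩ⟩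
      obtain ⟨V, hVb, hwV'⟩ := Set.mem_iUnion₂.1 (hbcov hwf)
      exact Set.mem_iUnion.2 ⟨Sum.inr ⟨V, hVb⟩, hwV'⟩
  obtain ⟨δ₀, hδ₀, hleb⟩ := lebesgue_number_lemma_of_metric hcc hUopen hUcov
  refine ⟨C, hC1, δ₀, hδ₀, ?_⟩
  intro x y hxcl hycl hxy
  obtain ⟨i, hi⟩ := hleb x hxcl
  have hyball : y ∈ Metric.ball x δ₀ := by
    rw [Metric.mem_ball, dist_comm]; exact hxy
  have hdnn : (0:ℝ) ≤ dist x y := dist_nonneg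
  rcases i with i | z
  · -- interior case : a straight segment
    have hseg : segment ℝ x y ⊆ Ω := by
      refine subset_trans ?_ hi
      exact (convex_ball x δ₀).segment_subset (Metric.mem_ball_self hδ₀) hyball
    refine ⟨segment ℝ x y, seg_compact x y, ⟨⟨x, left_mem_segment ℝ x y⟩,
      (convex_segment x y).isPreconnected⟩, subset_trans hseg subset_closure,
      left_mem_segment ℝ x y, right_mem_segment ℝ x y, ?_, ?_⟩
    · rw [seg_measure]
      apply ENNReal.ofReal_le_ofReal
      nlinarith
    · apply (convex_closedBall x (C * dist x y)).segment_subset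
      · simp only [Metric.mem_closedBall, dist_self]; positivity
      · rw [Metric.mem_closedBall, dist_comm]; nlinarith
  · -- boundary case : use the chart
    have hxball : x ∈ Metric.ball z.1 (ρf z.1) := hi (Metric.mem_ball_self hδ₀)
    have hyball' : y ∈ Metric.ball z.1 (ρf z.1) := hi hyball
    have hzf : z.1 ∈ frontier Ω := hbsub z.2
    obtain ⟨K, hK1, hK2, hK3, hK4, hK5, hK6, hK7⟩ :=
      hpropf z.1 hzf x y hxcl hycl (Metric.mem_ball.1 hxball) (Metric.mem_ball.1 hyball')
    refine ⟨K, hK1, hK2, hK3, hK4, hK5, ?_, ?_⟩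
    · refine le_trans hK6 (ENNReal.ofReal_le_ofReal ?_)
      exact mul_le_mul_of_nonneg_right (hCz z.1 z.2) hdnn
    · refine subset_trans hK7 (Metric.closedBall_subset_closedBall ?_)
      exact mul_le_mul_of_nonneg_right (hCz z.1 z.2) hdnn

set_option maxHeartbeats 2000000 in
/-- Merging lemma: a finite family of preconnected compacta, any bipartition of which has
two nearby points, can be connected up by adding short arcs. -/
lemma merge_lemma (Ω : Set E2) (C r : ℝ) (hC : 0 ≤ C) (hr : 0 ≤ r)
    (hQ : ∀ x y, x ∈ closure Ω → y ∈ closure Ω → dist x y < r →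
      ∃ K, IsCompact K ∧ IsConnected K ∧ K ⊆ closure Ω ∧ x ∈ K ∧ y ∈ K ∧
        μH[1] K ≤ ENNReal.ofReal (C * r) ∧ K ⊆ Metric.closedBall x (C * r)) :
    ∀ m : ℕ, ∀ D : Fin m → Set E2, (∀ i, IsCompact (D i)) → (∀ i, IsPreconnected (D i)) →
      (∀ i, D i ⊆ closure Ω) → (⋃ i, D i).Nonempty →
      (∀ s : Set (Fin m), (⋃ i ∈ s, D i).Nonempty → (⋃ i ∈ sᶜ, D i).Nonempty →
        ∃ x ∈ ⋃ i ∈ s, D i, ∃ y ∈ ⋃ i ∈ sᶜ, D i, dist x y < r) →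
      ∃ K, IsCompact K ∧ IsConnected K ∧ K ⊆ closure Ω ∧ (⋃ i, D i) ⊆ K ∧
        μH[1] (K \ (⋃ i, D i)) ≤ (m : ℝ≥0∞) * ENNReal.ofReal (C * r) ∧
        K ⊆ Metric.cthickening ((m : ℝ) * (C * r)) (⋃ i, D i) := by
  classical
  intro m
  induction m with
  | zero =>
    intro D _ _ _ hne _
    simp only [Set.iUnion_of_empty] at hne
    exact absurd hne Set.not_nonempty_empty
  | succ m IH =>
    intro D hcomp hconn hsub hne hchain
    have hCr0 : (0:ℝ) ≤ C * r := mul_nonneg hC hr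
    by_cases hrest : (⋃ i ∈ ({0}ᶜ : Set (Fin (m+1))), D i) = ∅
    · -- only the first set matters
      have hU : (⋃ i, D i) = D 0 := by
        apply Set.Subset.antisymm
        · intro w hw
          obtain ⟨i, hi⟩ := Set.mem_iUnion.1 hw
          by_cases hi0 : i = 0
          · rwa [hi0] at hi
          · exfalso
            have : w ∈ ⋃ i ∈ ({0}ᶜ : Set (Fin (m+1))), D i :=
              Set.mem_biUnion (by simpa using hi0) hi
            rw [hrest] at this
            exact this
        · exact Set.subset_iUnion D 0
      refine ⟨D 0, hcomp 0, ⟨by rwa [hU] at hne, hconn 0⟩, hsub 0, hU.le, ?_, ?_⟩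
      · rw [hU]
        simp
      · rw [hU]
        exact Metric.self_subset_cthickening _
    by_cases h0 : D 0 = ∅
    · -- drop the empty first set
      set D' : Fin m → Set E2 := fun i => D i.succ with hD'def
      have hU' : ⋃ i, D' i = ⋃ i, D i := by
        apply Set.Subset.antisymm
        · exact Set.iUnion_subset fun i => Set.subset_iUnion D i.succ
        · apply Set.iUnion_subset
          intro i
          by_cases hi0 : i = 0
          · rw [hi0, h0]; exact Set.empty_subset _
          · obtain ⟨k, hk⟩ := Fin.exists_succ_eq_of_ne_zero hi0
            rw [← hk]
            exact Set.subset_iUnion D' k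
      have hBij : ∀ s' : Set (Fin m),
          (⋃ i ∈ Fin.succ '' s', D i) = ⋃ i ∈ s', D' i := fun s' =>
        Set.biUnion_image
      have hBij' : ∀ s' : Set (Fin m),
          (⋃ i ∈ (Fin.succ '' s')ᶜ, D i) = ⋃ i ∈ s'ᶜ, D' i := by
        intro s'
        apply Set.Subset.antisymm
        · intro w hw
          obtain ⟨i, hi, hwD⟩ := Set.mem_iUnion₂.1 hw
          by_cases hi0 : i = 0
          · rw [hi0, h0] at hwD; exact absurd hwD (Set.notMem_empty w)
          · obtain ⟨k, hk⟩ := Fin.exists_succ_eq_of_ne_zero hi0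
            have hkc : k ∈ s'ᶜ := by
              intro hks
              exact hi ⟨k, hks, hk⟩
            exact Set.mem_biUnion hkc (by rw [hD'def]; simpa [hk] using hwD)
        · intro w hw
          obtain ⟨k, hk, hwD⟩ := Set.mem_iUnion₂.1 hw
          have : k.succ ∈ (Fin.succ '' s')ᶜ := by
            intro hmem
            obtain ⟨k', hk', hkk⟩ := hmem
            exact hk ((Fin.succ_injective m hkk) ▸ hk')
          exact Set.mem_biUnion this hwD
      obtain ⟨K, h1, h2, h3, h4, h5, h6⟩ := IH D' (fun i => hcomp i.succ)
        (fun i => hconn i.succ) (fun i => hsub i.succ) (by rwa [hU'])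
        (by
          intro s' hs1 hs2
          obtain ⟨xx, hxx, yy, hyy, hd⟩ := hchain (Fin.succ '' s')
            (by rwa [hBij]) (by rwa [hBij'])
          exact ⟨xx, by rwa [hBij] at hxx, yy, by rwa [hBij'] at hyy, hd⟩)
      rw [hU'] at h4 h5 h6
      refine ⟨K, h1, h2, h3, h4, le_trans h5 ?_, subset_trans h6 ?_⟩
      · refine mul_le_mul_of_nonneg_right ?_ zero_le
        exact_mod_cast Nat.cast_le.2 (Nat.le_succ m)
      · apply Metric.cthickening_mono
        apply mul_le_mul_of_nonneg_right _ hCr0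
        exact_mod_cast Nat.le_succ m
    · -- main case : connect the first set to one of the others
      have hs1 : (⋃ i ∈ ({0} : Set (Fin (m+1))), D i).Nonempty := by
        simp only [Set.mem_singleton_iff, Set.iUnion_iUnion_eq_left]
        exact Set.nonempty_iff_ne_empty.2 h0
      have hrest' : (⋃ i ∈ ({0}ᶜ : Set (Fin (m+1))), D i).Nonempty :=
        Set.nonempty_iff_ne_empty.2 hrest
      obtain ⟨x, hxmem, y, hymem, hdxy⟩ := hchain {0} hs1 hrest'
      have hxD0 : x ∈ D 0 := by simpa using hxmem
      obtain ⟨j, hj, hyDj⟩ := Set.mem_iUnion₂.1 hymem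
      have hjne : j ≠ 0 := by simpa using hj
      obtain ⟨K₀, hK₀c, hK₀conn, hK₀sub, hxK₀, hyK₀, hK₀meas, hK₀ball⟩ :=
        hQ x y (hsub 0 hxD0) (hsub j hyDj) hdxy
      obtain ⟨j', hj'⟩ := Fin.exists_succ_eq_of_ne_zero hjne
      set D' : Fin m → Set E2 := fun i => if i = j' then D 0 ∪ (K₀ ∪ D j) else D i.succ
        with hD'def
      have hD'j' : D' j' = D 0 ∪ (K₀ ∪ D j) := by rw [hD'def]; simp
      have hD'ne : ∀ i, i ≠ j' → D' i = D i.succ := by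
        intro i hi; rw [hD'def]; simp [hi]
      -- the union of the new family
      have hU' : ⋃ i, D' i = (⋃ i, D i) ∪ K₀ := by
        apply Set.Subset.antisymm
        · apply Set.iUnion_subset
          intro i
          by_cases hij : i = j'
          · rw [hij, hD'j']
            intro w hw
            rcases hw with hw | hw | hw
            · exact Set.mem_union_left _ (Set.mem_iUnion.2 ⟨0, hw⟩)
            · exact Set.mem_union_right _ hw
            · exact Set.mem_union_left _ (Set.mem_iUnion.2 ⟨j, hw⟩)
          · rw [hD'ne i hij]
            exact subset_trans (Set.subset_iUnion D i.succ) Set.subset_union_left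
        · apply Set.union_subset
          · apply Set.iUnion_subset
            intro i
            by_cases hi0 : i = 0
            · rw [hi0]
              refine subset_trans ?_ (Set.subset_iUnion D' j')
              rw [hD'j']
              exact Set.subset_union_left
            · obtain ⟨k, hk⟩ := Fin.exists_succ_eq_of_ne_zero hi0
              by_cases hkj : k = j'
              · refine subset_trans ?_ (Set.subset_iUnion D' j')
                rw [hD'j', ← hk, hkj, hj']
                exact subset_trans Set.subset_union_right Set.subset_union_right
              · refine subset_trans ?_ (Set.subset_iUnion D' k)
                rw [hD'ne k hkj, hk]
          · refine subset_trans ?_ (Set.subset_iUnion D' j')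
            rw [hD'j']
            exact subset_trans Set.subset_union_left Set.subset_union_right
      -- apply the induction hypothesis
      obtain ⟨K, h1, h2, h3, h4, h5, h6⟩ := IH D'
        (by
          intro i
          by_cases hij : i = j'
          · rw [hij, hD'j']
            exact (hcomp 0).union (hK₀c.union (hcomp j))
          · rw [hD'ne i hij]; exact hcomp i.succ)
        (by
          intro i
          by_cases hij : i = j'
          · rw [hij, hD'j']
            apply IsPreconnected.union x hxD0 (Set.mem_union_left _ hxK₀) (hconn 0)
            exact IsPreconnected.union y hyK₀ hyDj hK₀conn.isPreconnected (hconn j)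
          · rw [hD'ne i hij]; exact hconn i.succ)
        (by
          intro i
          by_cases hij : i = j'
          · rw [hij, hD'j']
            exact Set.union_subset (hsub 0) (Set.union_subset hK₀sub (hsub j))
          · rw [hD'ne i hij]; exact hsub i.succ)
        (by rw [hU']; exact hne.mono Set.subset_union_left)
        (by
          intro s' hs1' hs2'
          set s : Set (Fin (m+1)) :=
            {i | (∃ i' ∈ s', i = i'.succ) ∨ (i = 0 ∧ j' ∈ s')} with hsdef
          -- transfer of the two sides
          have T1 : ∀ i ∈ s, D i ⊆ ⋃ i' ∈ s', D' i' := by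
            rintro i (⟨i', hi', rfl⟩ | ⟨rfl, hj's⟩)
            · by_cases hij : i' = j'
              · subst hij
                refine subset_trans ?_ (Set.subset_biUnion_of_mem hi')
                rw [hD'j', ← hj']
                exact subset_trans Set.subset_union_right Set.subset_union_right
              · refine subset_trans ?_ (Set.subset_biUnion_of_mem hi')
                rw [hD'ne i' hij]
            · refine subset_trans ?_ (Set.subset_biUnion_of_mem hj's)
              rw [hD'j']
              exact Set.subset_union_left
          have T2 : ∀ i ∈ sᶜ, D i ⊆ ⋃ i' ∈ s'ᶜ, D' i' := by
            intro i hi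
            by_cases hi0 : i = 0
            · subst hi0
              have hj's : j' ∉ s' := by
                intro hj's
                exact hi (Or.inr ⟨rfl, hj's⟩)
              refine subset_trans ?_ (Set.subset_biUnion_of_mem hj's)
              rw [hD'j']
              exact Set.subset_union_left
            · obtain ⟨k, hk⟩ := Fin.exists_succ_eq_of_ne_zero hi0
              have hks : k ∉ s' := by
                intro hks
                exact hi (Or.inl ⟨k, hks, hk.symm⟩)
              by_cases hkj : k = j'
              · refine subset_trans ?_ (Set.subset_biUnion_of_mem hks)
                have hij : i = j := by rw [← hk, hkj, hj']
                rw [hij, hkj, hD'j']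
                exact subset_trans Set.subset_union_right Set.subset_union_right
              · refine subset_trans ?_ (Set.subset_biUnion_of_mem hks)
                rw [hD'ne k hkj, hk]
          -- nonemptiness of the two sides
          have hs1'' : (⋃ i ∈ s, D i).Nonempty := by
            obtain ⟨w, hw⟩ := hs1'
            obtain ⟨i', hi', hwD⟩ := Set.mem_iUnion₂.1 hw
            by_cases hij : i' = j'
            · subst hij
              rw [hD'j'] at hwD
              rcases hwD with hw' | hw' | hw'
              · exact ⟨w, Set.mem_biUnion (Or.inr ⟨rfl, hi'⟩) hw'⟩
              · exact ⟨x, Set.mem_biUnion (Or.inr ⟨rfl, hi'⟩) hxD0⟩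
              · exact ⟨w, Set.mem_biUnion (Or.inl ⟨i', hi', hj'.symm⟩) hw'⟩
            · rw [hD'ne i' hij] at hwD
              exact ⟨w, Set.mem_biUnion (Or.inl ⟨i', hi', rfl⟩) hwD⟩
          have hs2'' : (⋃ i ∈ sᶜ, D i).Nonempty := by
            obtain ⟨w, hw⟩ := hs2'
            obtain ⟨i', hi', hwD⟩ := Set.mem_iUnion₂.1 hw
            have hi'c : i' ∉ s' := hi'
            have h0s : (0 : Fin (m+1)) ∈ sᶜ ∨ j' ∈ s' := by
              by_cases hj's : j' ∈ s'
              · exact Or.inr hj's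
              · left
                intro h0s
                rcases h0s with ⟨i'', _, h⟩ | ⟨_, hj's'⟩
                · exact Fin.succ_ne_zero i'' h.symm
                · exact hj's hj's'
            by_cases hij : i' = j'
            · subst hij
              have h0c : (0 : Fin (m+1)) ∈ sᶜ := by
                rcases h0s with h | h
                · exact h
                · exact absurd h hi'c
              rw [hD'j'] at hwD
              rcases hwD with hw' | hw' | hw'
              · exact ⟨w, Set.mem_biUnion h0c hw'⟩
              · exact ⟨x, Set.mem_biUnion h0c hxD0⟩
              · have hjc : j ∈ sᶜ := by
                  intro hjs
                  rcases hjs with ⟨i'', hi'', h⟩ | ⟨hj0, _⟩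
                  · rw [← hj'] at h
                    exact hi'c ((Fin.succ_injective m h.symm) ▸ hi'')
                  · exact hjne hj0
                exact ⟨w, Set.mem_biUnion hjc hw'⟩
            · rw [hD'ne i' hij] at hwD
              have : i'.succ ∈ sᶜ := by
                intro hmem
                rcases hmem with ⟨i'', hi'', h⟩ | ⟨h0, _⟩
                · exact hi'c ((Fin.succ_injective m h) ▸ hi'')
                · exact Fin.succ_ne_zero i' h0
              exact ⟨w, Set.mem_biUnion this hwD⟩
          obtain ⟨xx, hxx, yy, hyy, hd⟩ := hchain s hs1'' hs2''
          obtain ⟨ix, hix, hxxD⟩ := Set.mem_iUnion₂.1 hxx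
          obtain ⟨iy, hiy, hyyD⟩ := Set.mem_iUnion₂.1 hyy
          exact ⟨xx, T1 ix hix hxxD, yy, T2 iy hiy hyyD, hd⟩)
      rw [hU'] at h4 h5 h6
      refine ⟨K, h1, h2, h3, subset_trans Set.subset_union_left h4, ?_, ?_⟩
      · -- measure estimate
        have hsplit : K \ (⋃ i, D i) ⊆ (K \ ((⋃ i, D i) ∪ K₀)) ∪ K₀ := by
          intro w hw
          by_cases hwK₀ : w ∈ K₀
          · exact Or.inr hwK₀
          · exact Or.inl ⟨hw.1, by
              intro hmem
              rcases hmem with h | h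
              · exact hw.2 h
              · exact hwK₀ h⟩
        calc μH[1] (K \ (⋃ i, D i)) ≤ μH[1] ((K \ ((⋃ i, D i) ∪ K₀)) ∪ K₀) :=
              measure_mono hsplit
          _ ≤ μH[1] (K \ ((⋃ i, D i) ∪ K₀)) + μH[1] K₀ := measure_union_le _ _
          _ ≤ (m : ℝ≥0∞) * ENNReal.ofReal (C * r) + ENNReal.ofReal (C * r) :=
              add_le_add h5 hK₀meas
          _ = ((m+1 : ℕ) : ℝ≥0∞) * ENNReal.ofReal (C * r) := by
              push_cast
              ring
      · -- thickening estimate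
        have hsub2 : (⋃ i, D i) ∪ K₀ ⊆ Metric.cthickening (C * r) (⋃ i, D i) := by
          apply Set.union_subset (Metric.self_subset_cthickening _)
          intro w hw
          exact Metric.mem_cthickening_of_dist_le w x (C*r) _ (Set.mem_iUnion.2 ⟨0, hxD0⟩)
            (Metric.mem_closedBall.1 (hK₀ball hw))
        calc K ⊆ Metric.cthickening ((m:ℝ) * (C*r)) ((⋃ i, D i) ∪ K₀) := h6
          _ ⊆ Metric.cthickening ((m:ℝ) * (C*r))
              (Metric.cthickening (C*r) (⋃ i, D i)) :=
              Metric.cthickening_subset_of_subset _ hsub2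
          _ ⊆ Metric.cthickening ((m:ℝ) * (C*r) + C*r) (⋃ i, D i) :=
              Metric.cthickening_cthickening_subset
                (mul_nonneg (Nat.cast_nonneg m) hCr0) hCr0 _
          _ = Metric.cthickening (((m+1:ℕ):ℝ) * (C*r)) (⋃ i, D i) := by
              norm_num
              ring_nf

/-- Two nearby points on opposite sides of a bipartition, via a connected set close to both. -/
lemma chain_from_connected (T : Set E2) (hTconn : IsPreconnected T) (hTne : T.Nonempty)
    (A B : Set E2) (hAne : A.Nonempty) (hBne : B.Nonempty)
    (ε θ : ℝ) (hθ : 0 < θ)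
    (h1 : ∀ w ∈ A ∪ B, Metric.infDist w T ≤ ε)
    (h2 : ∀ t ∈ T, Metric.infDist t (A ∪ B) ≤ ε) :
    ∃ x ∈ A, ∃ y ∈ B, dist x y < 2*ε + 2*θ := by
  set u : Set E2 := {w | Metric.infDist w A < ε + θ} with hu
  set v : Set E2 := {w | Metric.infDist w B < ε + θ} with hv
  have huo : IsOpen u := isOpen_Iio.preimage (Metric.continuous_infDist_pt A)
  have hvo : IsOpen v := isOpen_Iio.preimage (Metric.continuous_infDist_pt B)
  have hcov : T ⊆ u ∪ v := by
    intro t ht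
    have : Metric.infDist t (A ∪ B) < ε + θ := lt_of_le_of_lt (h2 t ht) (by linarith)
    obtain ⟨w, hw, hdw⟩ := (Metric.infDist_lt_iff (hAne.mono Set.subset_union_left)).1 this
    rcases hw with hw | hw
    · exact Or.inl (lt_of_le_of_lt (Metric.infDist_le_dist_of_mem hw) hdw)
    · exact Or.inr (lt_of_le_of_lt (Metric.infDist_le_dist_of_mem hw) hdw)
  have hTu : (T ∩ u).Nonempty := by
    obtain ⟨a, ha⟩ := hAne
    have : Metric.infDist a T < ε + θ :=
      lt_of_le_of_lt (h1 a (Set.mem_union_left _ ha)) (by linarith)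
    obtain ⟨t, ht, hdt⟩ := (Metric.infDist_lt_iff hTne).1 this
    refine ⟨t, ht, ?_⟩
    exact lt_of_le_of_lt (Metric.infDist_le_dist_of_mem ha) (by rwa [dist_comm])
  have hTv : (T ∩ v).Nonempty := by
    obtain ⟨a, ha⟩ := hBne
    have : Metric.infDist a T < ε + θ :=
      lt_of_le_of_lt (h1 a (Set.mem_union_right _ ha)) (by linarith)
    obtain ⟨t, ht, hdt⟩ := (Metric.infDist_lt_iff hTne).1 this
    refine ⟨t, ht, ?_⟩
    exact lt_of_le_of_lt (Metric.infDist_le_dist_of_mem ha) (by rwa [dist_comm])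
  obtain ⟨t, htT, htu, htv⟩ := hTconn u v huo hvo hcov hTu hTv
  obtain ⟨x, hx, hdx⟩ := (Metric.infDist_lt_iff hAne).1 htu
  obtain ⟨y, hy, hdy⟩ := (Metric.infDist_lt_iff hBne).1 htv
  refine ⟨x, hx, y, hy, ?_⟩
  calc dist x y ≤ dist x t + dist t y := dist_triangle x t y
    _ < (ε + θ) + (ε + θ) := by
        rw [dist_comm x t]
        exact add_lt_add hdx hdy
    _ = 2*ε + 2*θ := by ring

lemma haus_bound (Ω K1 K2 : Set E2) (hb : Bornology.IsBounded Ω)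
    (h1 : K1 ⊆ closure Ω) (h2 : K2 ⊆ closure Ω)
    (hne1 : K1.Nonempty) (hne2 : K2.Nonempty) :
    (∀ x ∈ K1, Metric.infDist x K2 ≤ hausDistIn Ω K1 K2) ∧
    (∀ y ∈ K2, Metric.infDist y K1 ≤ hausDistIn Ω K1 K2) ∧ 0 ≤ hausDistIn Ω K1 K2 := by
  have hbc : Bornology.IsBounded (closure Ω) := hb.closure
  have hBdd : ∀ S T : Set E2, S ⊆ closure Ω → T ⊆ closure Ω → T.Nonempty →
      BddAbove ((fun x => distIn Ω x T) '' S) := by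
    rintro S T hS hT ⟨w, hw⟩
    refine ⟨Metric.diam (closure Ω), ?_⟩
    rintro _ ⟨x, hx, rfl⟩
    simp only [distIn]; rw [if_neg (Set.nonempty_iff_ne_empty.1 ⟨w, hw⟩)]
    exact le_trans (Metric.infDist_le_dist_of_mem hw)
      (Metric.dist_le_diam_of_mem hbc (hS hx) (hT hw))
  have hA : ∀ x ∈ K1, Metric.infDist x K2 ≤ hausDistIn Ω K1 K2 := by
    intro x hx
    have hmem : Metric.infDist x K2 ∈ (fun x => distIn Ω x K2) '' K1 := by
      refine ⟨x, hx, ?_⟩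
      simp only [distIn]; rw [if_neg (Set.nonempty_iff_ne_empty.1 hne2)]
    exact le_trans (le_csSup (hBdd K1 K2 h1 h2 hne2) hmem) (le_max_left _ _)
  have hB : ∀ y ∈ K2, Metric.infDist y K1 ≤ hausDistIn Ω K1 K2 := by
    intro y hy
    have hmem : Metric.infDist y K1 ∈ (fun x => distIn Ω x K1) '' K2 := by
      refine ⟨y, hy, ?_⟩
      simp only [distIn]; rw [if_neg (Set.nonempty_iff_ne_empty.1 hne1)]
    exact le_trans (le_csSup (hBdd K2 K1 h2 h1 hne1) hmem) (le_max_right _ _)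
  refine ⟨hA, hB, ?_⟩
  obtain ⟨x, hx⟩ := hne1
  exact le_trans Metric.infDist_nonneg (hA x hx)

lemma haus_le (Ω K1 K2 : Set E2) (hne1 : K1.Nonempty) (hne2 : K2.Nonempty)
    (M : ℝ) (hM : 0 ≤ M)
    (h1 : ∀ x ∈ K1, Metric.infDist x K2 ≤ M) (h2 : ∀ y ∈ K2, Metric.infDist y K1 ≤ M) :
    hausDistIn Ω K1 K2 ≤ M := by
  apply max_le
  · apply Real.sSup_le _ hM
    rintro _ ⟨x, hx, rfl⟩
    simp only [distIn]; rw [if_neg (Set.nonempty_iff_ne_empty.1 hne2)]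
    exact h1 x hx
  · apply Real.sSup_le _ hM
    rintro _ ⟨y, hy, rfl⟩
    simp only [distIn]; rw [if_neg (Set.nonempty_iff_ne_empty.1 hne1)]
    exact h2 y hy

lemma haus_empty (Ω K2 : Set E2) (hne2 : K2.Nonempty) (hd : 0 ≤ Metric.diam Ω) :
    hausDistIn Ω ∅ K2 = Metric.diam Ω := by
  rw [hausDistIn]
  have h1 : (fun x => distIn Ω x K2) '' ∅ = ∅ := Set.image_empty _
  have h2 : (fun x => distIn Ω x (∅ : Set E2)) '' K2 = {Metric.diam Ω} := by
    have : (fun x => distIn Ω x (∅ : Set E2)) = fun _ => Metric.diam Ω := by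
      funext x
      simp only [distIn, if_true, eq_self_iff_true]
    rw [this]
    exact hne2.image_const _
  rw [h1, h2, Real.sSup_empty, csSup_singleton]
  exact max_eq_right hd

set_option maxHeartbeats 4000000 in
/-- If `H` is a connected compact subset of `closure Ω` and `Hₙ → H` in the Hausdorff metric,
where each `Hₙ` is compact with at most `p` connected components, then there are connected
compact sets `Ĥₙ ⊇ Hₙ` with `Ĥₙ → H` in the Hausdorff metric and `ℋ¹(Ĥₙ \ Hₙ) → 0`. -/
theorem connect_components_approx (Ω : Set E2) (hΩo : IsOpen Ω)
    (hΩb : Bornology.IsBounded Ω) (hΩconn : IsConnected Ω)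
    (hΩlip : HasLipschitzBoundary Ω) (p : ℕ) (hp : 1 ≤ p)
    (H : ℕ → Set E2) (hHc : ∀ n, IsCompact (H n)) (hHs : ∀ n, H n ⊆ closure Ω)
    (hHp : ∀ n, AtMostComponents p (H n))
    (Hlim : Set E2) (hHlimc : IsCompact Hlim) (hHlims : Hlim ⊆ closure Ω)
    (hHlimconn : IsConnected Hlim)
    (hconv : TendstoHausdorff Ω H Hlim) :
    ∃ Hh : ℕ → Set E2,
      (∀ n, IsCompact (Hh n)) ∧ (∀ n, IsConnected (Hh n)) ∧
      (∀ n, Hh n ⊆ closure Ω) ∧ (∀ n, H n ⊆ Hh n) ∧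
      TendstoHausdorff Ω Hh Hlim ∧
      Filter.Tendsto (fun n => μH[1] (Hh n \ H n)) Filter.atTop (nhds 0) := by
  classical
  have hclb : Bornology.IsBounded (closure Ω) := hΩb.closure
  have hclc : IsCompact (closure Ω) :=
    Metric.isCompact_of_isClosed_isBounded isClosed_closure hclb
  -- the diameter of Ω is positive
  obtain ⟨z0, hz0⟩ := hΩconn.nonempty
  obtain ⟨ε0, hε0, hball0⟩ := Metric.isOpen_iff.1 hΩo z0 hz0
  have hdiam : 0 < Metric.diam Ω := by
    set w0 : E2 := z0 + EuclideanSpace.single (0 : Fin 2) (ε0/2) with hw0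
    have hdw : dist w0 z0 = ε0/2 := by
      rw [hw0, dist_self_add_left, EuclideanSpace.norm_single, Real.norm_eq_abs,
        abs_of_pos (by linarith)]
    have hw0Ω : w0 ∈ Ω := hball0 (by rw [Metric.mem_ball, hdw]; linarith)
    calc (0:ℝ) < ε0/2 := by linarith
      _ = dist w0 z0 := hdw.symm
      _ ≤ Metric.diam Ω := Metric.dist_le_diam_of_mem hΩb hw0Ω hz0
  obtain ⟨Cq, hCq1, δ₀, hδ₀, hQ⟩ := quasiconvex Ω hΩo hΩb hΩlip
  have hCq0 : (0:ℝ) ≤ Cq := by linarith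
  set d : ℕ → ℝ := fun n => hausDistIn Ω (H n) Hlim with hd
  have hdconv : Tendsto d atTop (nhds 0) := hconv
  set r : ℕ → ℝ := fun n => 4 * d n + 1/(n+1) with hrdef
  have hrconv : Tendsto r atTop (nhds 0) := by
    have h1 : Tendsto (fun n : ℕ => 4 * d n) atTop (nhds (4 * 0)) := hdconv.const_mul 4
    have h2 : Tendsto (fun n : ℕ => 1 / ((n:ℝ) + 1)) atTop (nhds 0) :=
      tendsto_one_div_add_atTop_nhds_zero_nat
    simpa only [mul_zero, add_zero] using h1.add h2
  -- eventual nonemptiness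
  have hne_ev : ∀ᶠ n in atTop, (H n).Nonempty := by
    filter_upwards [hdconv.eventually_lt_const hdiam] with n hn
    by_contra hemp
    rw [Set.not_nonempty_iff_eq_empty] at hemp
    have hn' : hausDistIn Ω (H n) Hlim < Metric.diam Ω := hn
    rw [hemp, haus_empty Ω Hlim hHlimconn.nonempty (le_of_lt hdiam)] at hn'
    exact lt_irrefl _ hn'
  -- the predicate describing a good connected enlargement
  set P : ℕ → Prop := fun n => ∃ K, IsCompact K ∧ IsConnected K ∧ K ⊆ closure Ω ∧
      H n ⊆ K ∧ μH[1] (K \ H n) ≤ (p : ℝ≥0∞) * ENNReal.ofReal (Cq * r n) ∧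
      K ⊆ Metric.cthickening ((p : ℝ) * (Cq * r n)) (H n) with hP
  have hPev : ∀ᶠ n in atTop, P n := by
    filter_upwards [hne_ev, hrconv.eventually_lt_const hδ₀] with n hne hrn
    have hd0 : 0 ≤ d n :=
      (haus_bound Ω (H n) Hlim hΩb (hHs n) hHlims hne hHlimconn.nonempty).2.2
    have hn1 : (0:ℝ) < (n:ℝ)+1 := by positivity
    have hrn0 : 0 < r n := by
      have h1 : (0:ℝ) < 1/((n:ℝ)+1) := by positivity
      have : r n = 4 * d n + 1/((n:ℝ)+1) := rfl
      rw [this]; linarith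
    obtain ⟨Cc, hCpre, hCun⟩ := hHp n
    set D : Fin p → Set E2 := fun i => closure (Cc i) with hD
    have hDsubH : ∀ i, D i ⊆ H n := by
      intro i
      have : IsClosed (H n) := (hHc n).isClosed
      apply closure_minimal _ this
      rw [hCun]
      exact Set.subset_iUnion Cc i
    have hUD : ⋃ i, D i = H n := by
      apply Set.Subset.antisymm (Set.iUnion_subset hDsubH)
      calc H n = ⋃ i, Cc i := hCun
        _ ⊆ ⋃ i, D i := Set.iUnion_mono fun i => subset_closure
    have hDcomp : ∀ i, IsCompact (D i) :=
      fun i => (hHc n).of_isClosed_subset isClosed_closure (hDsubH i)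
    have hDconn : ∀ i, IsPreconnected (D i) := fun i => (hCpre i).closure
    have hDsub : ∀ i, D i ⊆ closure Ω := fun i => (hDsubH i).trans (hHs n)
    have hDne : (⋃ i, D i).Nonempty := by rw [hUD]; exact hne
    have hQ' : ∀ x y, x ∈ closure Ω → y ∈ closure Ω → dist x y < r n →
        ∃ K, IsCompact K ∧ IsConnected K ∧ K ⊆ closure Ω ∧ x ∈ K ∧ y ∈ K ∧
          μH[1] K ≤ ENNReal.ofReal (Cq * r n) ∧ K ⊆ Metric.closedBall x (Cq * r n) := by
      intro x y hx hy hxy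
      obtain ⟨K, h1, h2, h3, h4, h5, h6, h7⟩ := hQ x y hx hy (lt_trans hxy hrn)
      exact ⟨K, h1, h2, h3, h4, h5,
        le_trans h6 (ENNReal.ofReal_le_ofReal (mul_le_mul_of_nonneg_left hxy.le hCq0)),
        subset_trans h7 (Metric.closedBall_subset_closedBall
          (mul_le_mul_of_nonneg_left hxy.le hCq0))⟩
    have hchain : ∀ s : Set (Fin p), (⋃ i ∈ s, D i).Nonempty → (⋃ i ∈ sᶜ, D i).Nonempty →
        ∃ x ∈ ⋃ i ∈ s, D i, ∃ y ∈ ⋃ i ∈ sᶜ, D i, dist x y < r n := by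
      intro s hs1 hs2
      have hABU : (⋃ i ∈ s, D i) ∪ (⋃ i ∈ sᶜ, D i) = H n := by
        rw [← Set.biUnion_union, Set.union_compl_self, ← hUD]
        simp
      obtain ⟨hb1, hb2, _⟩ :=
        haus_bound Ω (H n) Hlim hΩb (hHs n) hHlims hne hHlimconn.nonempty
      have hθ : (0:ℝ) < 1/(4*((n:ℝ)+1)) := by positivity
      obtain ⟨x, hx, y, hy, hdxy⟩ := chain_from_connected Hlim hHlimconn.isPreconnected
        hHlimconn.nonempty _ _ hs1 hs2 (d n) (1/(4*((n:ℝ)+1))) hθ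
        (by rw [hABU]; intro w hw; exact hb1 w hw)
        (by intro t ht; rw [hABU]; exact hb2 t ht)
      refine ⟨x, hx, y, hy, lt_of_lt_of_le hdxy ?_⟩
      have heq1 : 2*(1/(4*((n:ℝ)+1))) = 1/(2*((n:ℝ)+1)) := by
        field_simp
        ring
      have heq2 : 1/(2*((n:ℝ)+1)) ≤ 1/((n:ℝ)+1) := by
        apply one_div_le_one_div_of_le hn1
        linarith
      have : r n = 4 * d n + 1/((n:ℝ)+1) := rfl
      rw [this]
      linarith
    obtain ⟨K, h1, h2, h3, h4, h5, h6⟩ := merge_lemma Ω Cq (r n) hCq0 hrn0.le hQ' p D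
      hDcomp hDconn hDsub hDne hchain
    rw [hUD] at h4 h5 h6
    exact ⟨K, h1, h2, h3, h4, h5, h6⟩
  -- the sequence of enlargements
  set Hh : ℕ → Set E2 := fun n => if h : P n then h.choose else closure Ω with hHh
  have hspec : ∀ n, IsCompact (Hh n) ∧ IsConnected (Hh n) ∧ Hh n ⊆ closure Ω ∧
      H n ⊆ Hh n := by
    intro n
    by_cases h : P n
    · have hs := h.choose_spec
      simp only [hHh, dif_pos h]
      exact ⟨hs.1, hs.2.1, hs.2.2.1, hs.2.2.2.1⟩
    · simp only [hHh, dif_neg h]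
      exact ⟨hclc, hΩconn.closure, subset_rfl, hHs n⟩
  have hPbound : ∀ n, P n → μH[1] (Hh n \ H n) ≤ (p : ℝ≥0∞) * ENNReal.ofReal (Cq * r n) ∧
      Hh n ⊆ Metric.cthickening ((p:ℝ) * (Cq * r n)) (H n) := by
    intro n h
    have hs := h.choose_spec
    simp only [hHh, dif_pos h]
    exact ⟨hs.2.2.2.2.1, hs.2.2.2.2.2⟩
  refine ⟨Hh, fun n => (hspec n).1, fun n => (hspec n).2.1, fun n => (hspec n).2.2.1,
    fun n => (hspec n).2.2.2, ?_, ?_⟩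
  · -- Hausdorff convergence
    show Filter.Tendsto (fun n => hausDistIn Ω (Hh n) Hlim) Filter.atTop (nhds 0)
    apply tendsto_of_tendsto_of_tendsto_of_le_of_le' (g := fun _ => (0:ℝ))
      (h := fun n => d n + (p:ℝ) * (Cq * r n))
    · exact tendsto_const_nhds
    · have h2 : Tendsto (fun n => ((p:ℝ) * Cq) * r n) atTop (nhds (((p:ℝ)*Cq) * 0)) :=
        hrconv.const_mul _
      have heq : (fun n => d n + (p:ℝ) * (Cq * r n))
          = fun n => d n + ((p:ℝ)*Cq) * r n := by funext n; ring
      rw [heq]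
      simpa using hdconv.add h2
    · filter_upwards [hne_ev] with n hne
      have hHhne : (Hh n).Nonempty := hne.mono (hspec n).2.2.2
      exact (haus_bound Ω (Hh n) Hlim hΩb (hspec n).2.2.1 hHlims hHhne
        hHlimconn.nonempty).2.2
    · filter_upwards [hne_ev, hPev] with n hne hPn
      obtain ⟨hb1, hb2, hd0⟩ :=
        haus_bound Ω (H n) Hlim hΩb (hHs n) hHlims hne hHlimconn.nonempty
      have hrn0 : 0 ≤ r n := by
        have h1 : (0:ℝ) ≤ 1/((n:ℝ)+1) := by positivity
        have hd0' : 0 ≤ d n := hd0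
        have : r n = 4 * d n + 1/((n:ℝ)+1) := rfl
        rw [this]; linarith
      have hρ0 : (0:ℝ) ≤ (p:ℝ)*(Cq*r n) :=
        mul_nonneg (Nat.cast_nonneg p) (mul_nonneg hCq0 hrn0)
      obtain ⟨hmeas, hthick⟩ := hPbound n hPn
      have hHhne : (Hh n).Nonempty := hne.mono (hspec n).2.2.2
      apply haus_le Ω (Hh n) Hlim hHhne hHlimconn.nonempty _ (by linarith)
      · intro zK hzK
        have h1 : Metric.infDist zK (H n) ≤ (p:ℝ)*(Cq*r n) := by
          have hm := Metric.mem_cthickening_iff.1 (hthick hzK)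
          exact ENNReal.toReal_le_of_le_ofReal hρ0 hm
        obtain ⟨w, hwH, hwd⟩ := (hHc n).exists_infDist_eq_dist hne zK
        have h2 : dist zK w ≤ (p:ℝ)*(Cq*r n) := by rw [← hwd]; exact h1
        calc Metric.infDist zK Hlim ≤ Metric.infDist w Hlim + dist zK w :=
              Metric.infDist_le_infDist_add_dist
          _ ≤ d n + (p:ℝ)*(Cq * r n) := add_le_add (hb1 w hwH) h2
      · intro t ht
        calc Metric.infDist t (Hh n) ≤ Metric.infDist t (H n) :=
              Metric.infDist_le_infDist_of_subset (hspec n).2.2.2 hne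
          _ ≤ d n := hb2 t ht
          _ ≤ d n + (p:ℝ)*(Cq * r n) := by
              have h1 : (0:ℝ) ≤ 1/((n:ℝ)+1) := by positivity
              have : r n = 4 * d n + 1/((n:ℝ)+1) := rfl
              nlinarith [mul_nonneg (Nat.cast_nonneg (α := ℝ) p)
                (mul_nonneg hCq0 (by rw [this]; linarith [hd0] : (0:ℝ) ≤ r n))]
  · -- measure convergence
    apply tendsto_of_tendsto_of_tendsto_of_le_of_le' (g := fun _ => (0:ℝ≥0∞))
      (h := fun n => (p:ℝ≥0∞) * ENNReal.ofReal (Cq * r n))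
    · exact tendsto_const_nhds
    · have h1 : Tendsto (fun n => ENNReal.ofReal (Cq * r n)) atTop (nhds 0) := by
        have h0 : Tendsto (fun n => Cq * r n) atTop (nhds (Cq * 0)) := hrconv.const_mul Cq
        have := ENNReal.tendsto_ofReal h0
        simpa using this
      simpa using ENNReal.Tendsto.const_mul h1 (Or.inr (ENNReal.natCast_ne_top p))
    · exact Filter.Eventually.of_forall fun n => zero_le
    · filter_upwards [hPev] with n hPn
      exact (hPbound n hPn).1
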